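/- There is no divisor class D = a·ẽ₀ − Σᵢ bᵢ·ẽᵢ in a rank-8 lattice with intersection form diag(2,−2,…,−2) (basis ẽ₀,…,ẽ₇) such that D·H = 6 and D² = 4, where H = 3ẽ₀ − Σᵢ₌₁⁷ ẽᵢ, all bᵢ ≥ 0, bᵢ ≤ 3, and D has nonnegative pairing with each of the classes ẽᵢ (1≤i≤7), ẽ₀−ẽᵢ−ẽⱼ (i≠j), 2ẽ₀−ẽ_{i₁}−⋯−ẽ_{i₅}, and 3ẽ₀−Σ_{i≠j}ẽᵢ−2ẽⱼ. -/

import Mathlib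

/-- In the rank-8 lattice `Pic(X_f)` with intersection form `diag(2,−2,…,−2)` in the
basis `ẽ₀,…,ẽ₇`, write `D = a·ẽ₀ − ∑ bᵢ·ẽᵢ` and `H = 3ẽ₀ − ∑ ẽᵢ`.  Then
`D·H = 6a − 2∑bᵢ`, `D² = 2a² − 2∑bᵢ²`, `D·ẽᵢ = 2bᵢ`,
`D·(ẽ₀−ẽᵢ−ẽⱼ) = 2a−2bᵢ−2bⱼ`, `D·(2ẽ₀−ẽ_{i₁}−⋯−ẽ_{i₅}) = 4a−2∑_{t}b_{i_t}`, and
`D·(3ẽ₀−∑_{i≠j}ẽᵢ−2ẽⱼ) = 6a−2∑_{i≠j}bᵢ−4bⱼ`.  There is no such `D` with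
`D·H = 6`, `D² = 4`, `0 ≤ bᵢ ≤ 3`, and nonnegative pairing with all of the 56
listed classes. -/
theorem stmt1 :
    ¬ ∃ (a : ℤ) (b : Fin 7 → ℤ),
      (6 * a - 2 * ∑ i, b i = 6) ∧
      (2 * a ^ 2 - 2 * ∑ i, (b i) ^ 2 = 4) ∧
      (∀ i, 0 ≤ 2 * b i) ∧
      (∀ i, b i ≤ 3) ∧
      (∀ i j, i ≠ j → 0 ≤ 2 * a - 2 * b i - 2 * b j) ∧
      (∀ S : Finset (Fin 7), S.card = 5 → 0 ≤ 4 * a - 2 * ∑ i ∈ S, b i) ∧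
      (∀ j, 0 ≤ 6 * a - 2 * ∑ i ∈ Finset.univ.erase j, b i - 4 * b j) := by
  rintro ⟨a, b, h1, h2, -, -, -, -, -⟩
  -- each bᵢ² − bᵢ is even
  have hev : Even (∑ i, ((b i) ^ 2 - b i)) := by
    apply Finset.even_sum
    intro i _
    show Even (b i ^ 2 - b i)
    rw [show b i ^ 2 - b i = (b i - 1) * (b i - 1 + 1) by ring]
    exact Int.even_mul_succ_self _
  have hsub : (∑ i, ((b i) ^ 2 - b i)) = (∑ i, (b i) ^ 2) - ∑ i, b i :=
    Finset.sum_sub_distrib _ _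
  have ha : Even (a * (a - 1)) := by
    have := Int.even_mul_succ_self (a - 1)
    convert this using 1
    ring
  obtain ⟨k, hk⟩ := hev
  obtain ⟨m, hm⟩ := ha
  have hfin : 2 * k - 2 * m + 2 * a = 1 := by nlinarith [hk, hm, h1, h2, hsub]
  omega
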